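/- If ρ(θ;t) is a smooth family of density matrices satisfying ∂_θ ρ = (Lρ + ρL)/2 for a Hermitian SLD L(θ;t), and ρ evolves by ∂_t ρ = K(ρ) for a linear superoperator K, then the time derivative of the quantum Fisher information F = Tr(L²ρ) equals Tr( L(2∂_θ − L) K(ρ) ), i.e. dF/dt = 2 Tr(L ∂_θ(Kρ)) − Tr(L² Kρ). -/

import Mathlib

open Matrix ComplexOrder

private lemma entry_mul_deriv {n : ℕ} {A B : ℝ → Matrix (Fin n) (Fin n) ℂ}
    {A' B' : Matrix (Fin n) (Fin n) ℂ} {t : ℝ}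
    (hA : ∀ i j, HasDerivAt (fun s => A s i j) (A' i j) t)
    (hB : ∀ i j, HasDerivAt (fun s => B s i j) (B' i j) t) (i j : Fin n) :
    HasDerivAt (fun s => (A s * B s) i j) ((A' * B t + A t * B') i j) t := by
  simp only [Matrix.mul_apply, Matrix.add_apply]
  have : HasDerivAt (fun s => ∑ k, A s i k * B s k j)
      (∑ k, (A' i k * B t k j + A t i k * B' k j)) t :=
    HasDerivAt.fun_sum fun k _ => (hA i k).mul (hB k j)
  simpa [Finset.sum_add_distrib] using this

private lemma trace_deriv {n : ℕ} {A : ℝ → Matrix (Fin n) (Fin n) ℂ}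
    {A' : Matrix (Fin n) (Fin n) ℂ} {t : ℝ}
    (hA : ∀ i j, HasDerivAt (fun s => A s i j) (A' i j) t) :
    HasDerivAt (fun s => (A s).trace) A'.trace t := by
  simp only [Matrix.trace, Matrix.diag]
  exact HasDerivAt.fun_sum fun i _ => hA i i

/-- If `∂_θ ρ = (Lρ + ρL)/2` (SLD equation) and `∂_t ρ = K(ρ)` for a linear
superoperator `K`, then the quantum Fisher information `F = Tr(L²ρ)` satisfies
`dF/dt = 2 Tr(L ∂_θ(Kρ)) − Tr(L² Kρ)`. -/
theorem qfi_flow_formula {n : ℕ}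
    (ρ L ρθ : ℝ → ℝ → Matrix (Fin n) (Fin n) ℂ)
    (K : Matrix (Fin n) (Fin n) ℂ →ₗ[ℂ] Matrix (Fin n) (Fin n) ℂ)
    (θ t : ℝ) (Lt ρθt : Matrix (Fin n) (Fin n) ℂ)
    (hHerm : ∀ x s, (L x s).IsHermitian)
    (hρ : ∀ x s, (ρ x s).PosSemidef ∧ (ρ x s).trace = 1)
    (hSLD : ∀ x s, ρθ x s = (1 / 2 : ℂ) • (L x s * ρ x s + ρ x s * L x s))
    (hρθ : ∀ x s i j, HasDerivAt (fun y => ρ y s i j) (ρθ x s i j) x)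
    (hK : ∀ x s i j, HasDerivAt (fun u => ρ x u i j) (K (ρ x s) i j) s)
    (hLt : ∀ i j, HasDerivAt (fun s => L θ s i j) (Lt i j) t)
    (hρθt : ∀ i j, HasDerivAt (fun s => ρθ θ s i j) (ρθt i j) t)
    (hmix : ∀ i j, HasDerivAt (fun x => K (ρ x t) i j) (ρθt i j) θ) :
    HasDerivAt (fun s => ((L θ s) ^ 2 * ρ θ s).trace)
      (2 * (L θ t * ρθt).trace - ((L θ t) ^ 2 * K (ρ θ t)).trace) t := by
  set AL := L θ t with hAL
  set Aρ := ρ θ t with hAρ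
  set Kρ := K (ρ θ t) with hKρ
  have hρt : ∀ i j, HasDerivAt (fun s => ρ θ s i j) (Kρ i j) t := fun i j => hK θ t i j
  -- derivative of L*ρ and ρ*L entrywise
  have hLρ : ∀ i j, HasDerivAt (fun s => (L θ s * ρ θ s) i j)
      ((Lt * Aρ + AL * Kρ) i j) t := entry_mul_deriv hLt hρt
  have hρL : ∀ i j, HasDerivAt (fun s => (ρ θ s * L θ s) i j)
      ((Kρ * AL + Aρ * Lt) i j) t := entry_mul_deriv hρt hLt
  -- identify ρθt
  have key : ρθt = (1 / 2 : ℂ) • (Lt * Aρ + AL * Kρ + (Kρ * AL + Aρ * Lt)) := by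
    ext i j
    have h1 : HasDerivAt (fun s => ρθ θ s i j)
        (((1 / 2 : ℂ) • (Lt * Aρ + AL * Kρ + (Kρ * AL + Aρ * Lt))) i j) t := by
      have : (fun s => ρθ θ s i j)
          = fun s => (1 / 2 : ℂ) * ((L θ s * ρ θ s) i j + (ρ θ s * L θ s) i j) := by
        funext s
        rw [hSLD θ s]
        simp [Matrix.smul_apply, Matrix.add_apply]
      rw [this]
      simpa [Matrix.smul_apply, Matrix.add_apply, smul_eq_mul] using
        (((hLρ i j).add (hρL i j)).const_mul ((1 : ℂ) / 2))
    exact (hρθt i j).unique h1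
  -- derivative of L² ρ entrywise
  have hL2 : ∀ i j, HasDerivAt (fun s => (L θ s * L θ s) i j)
      ((Lt * AL + AL * Lt) i j) t := entry_mul_deriv hLt hLt
  have hL2ρ : ∀ i j, HasDerivAt (fun s => (L θ s * L θ s * ρ θ s) i j)
      (((Lt * AL + AL * Lt) * Aρ + AL * AL * Kρ) i j) t := entry_mul_deriv hL2 hρt
  have hD : HasDerivAt (fun s => (L θ s * L θ s * ρ θ s).trace)
      (((Lt * AL + AL * Lt) * Aρ + AL * AL * Kρ).trace) t := trace_deriv hL2ρ
  have hfun : (fun s => ((L θ s) ^ 2 * ρ θ s).trace)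
      = fun s => (L θ s * L θ s * ρ θ s).trace := by
    funext s; rw [sq]
  rw [hfun]
  -- algebraic identification of the derivative value
  have halg : 2 * (AL * ρθt).trace - (AL ^ 2 * Kρ).trace
      = ((Lt * AL + AL * Lt) * Aρ + AL * AL * Kρ).trace := by
    rw [key, sq]
    simp only [Matrix.mul_smul, Matrix.trace_smul, mul_add, add_mul, Matrix.trace_add,
      smul_eq_mul]
    have c1 : (AL * (Kρ * AL)).trace = (AL * AL * Kρ).trace := by
      rw [← Matrix.mul_assoc, Matrix.trace_mul_cycle]
    have c2 : (AL * (Aρ * Lt)).trace = (Lt * AL * Aρ).trace := by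
      rw [← Matrix.mul_assoc, Matrix.trace_mul_cycle]
    have c3 : (AL * (Lt * Aρ)).trace = (AL * Lt * Aρ).trace := by
      rw [Matrix.mul_assoc]
    have c4 : (AL * (AL * Kρ)).trace = (AL * AL * Kρ).trace := by
      rw [Matrix.mul_assoc]
    rw [c1, c2, c3, c4]
    ring
  rw [halg]
  exact hD
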